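/- In the disjoint setting, the intended marginal vector is a valid marginal vector for a mixed strategy with budget b_1: defining ρ(v_j) = 1 − (p−b_1)/(w_{e*_j} S_p) for j ≤ p and ρ(v_j) = 0 for j > p, one has 0 ≤ ρ(v_j) ≤ 1 for every j ∈ {1,…,n} and Σ_{j=1}^{n} ρ(v_j) = b_1. -/

import Mathlib

open Finset

/-- In the disjoint setting, the intended marginal vector is a valid
marginal vector for a mixed strategy with budget `b₁`: each entry lies in `[0,1]` and
the entries sum to `b₁`.  Nodes are indexed 0-based by `Fin n`, so the paper's `p`
equals our `(p : ℕ) + 1`. -/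
theorem stmt1
    {n : ℕ} {E : Type*} [Fintype E] [DecidableEq E]
    (M : Fin n → Finset E) (w : E → ℝ)
    (hMne : ∀ i, (M i).Nonempty)
    (hcov : ∀ e : E, ∃ i, e ∈ M i)
    (hdisj : ∀ i j : Fin n, i ≠ j → Disjoint (M i) (M j))
    (hw : ∀ e, 0 < w e ∧ w e ≤ 1)
    (estar : Fin n → E)
    (hestar : ∀ i, estar i ∈ M i ∧ ∀ e ∈ M i, w e ≤ w (estar i))
    (horder : ∀ i j : Fin n, i ≤ j → w (estar j) ≤ w (estar i))
    (b1 : ℕ) (hb1 : b1 ≤ n)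
    (p : Fin n)
    (hpZ : (((p : ℕ) : ℝ) + 1 - b1) / (∑ i ∈ Finset.Iic p, 1 / w (estar i)) ≤ w (estar p))
    (hpmax : ∀ j : Fin n,
      (((j : ℕ) : ℝ) + 1 - b1) / (∑ i ∈ Finset.Iic j, 1 / w (estar i)) ≤ w (estar j) → j ≤ p)
    (Sp : ℝ) (hSp : Sp = ∑ i ∈ Finset.Iic p, 1 / w (estar i))
    (ρ : Fin n → ℝ)
    (hρ : ∀ j : Fin n,
      ρ j = if j ≤ p then 1 - (((p : ℕ) : ℝ) + 1 - b1) / (w (estar j) * Sp) else 0) :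
    (∀ j : Fin n, 0 ≤ ρ j ∧ ρ j ≤ 1) ∧ (∑ j : Fin n, ρ j = b1) := by
  have hwpos : ∀ i : Fin n, 0 < w (estar i) := fun i => (hw _).1
  have hSppos : 0 < Sp := by
    rw [hSp]
    apply Finset.sum_pos
    · intro i _
      have := hwpos i
      positivity
    · exact ⟨p, Finset.mem_Iic.mpr le_rfl⟩
  -- b1 ≤ p + 1
  have hc : (b1 : ℝ) ≤ ((p : ℕ) : ℝ) + 1 := by
    by_contra h
    push_neg at h
    have hb1' : (p : ℕ) + 1 < b1 := by exact_mod_cast h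
    have hb1pos : 1 ≤ b1 := by omega
    have hjn : b1 - 1 < n := by omega
    set j : Fin n := ⟨b1 - 1, hjn⟩ with hjdef
    have hnum : (((j : ℕ) : ℝ) + 1 - b1) = 0 := by
      have : ((j : ℕ) : ℝ) = (b1 : ℝ) - 1 := by
        simp only [hjdef]
        push_cast [Nat.cast_sub hb1pos]
        ring
      rw [this]; ring
    have hj := hpmax j (by rw [hnum, zero_div]; exact (hwpos j).le)
    have : (j : ℕ) ≤ (p : ℕ) := hj
    simp only [hjdef] at this
    omega
  have hcnn : 0 ≤ ((p : ℕ) : ℝ) + 1 - b1 := by linarith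
  have key : ∀ j : Fin n, j ≤ p →
      ((p : ℕ) : ℝ) + 1 - (b1 : ℝ) ≤ w (estar j) * Sp := by
    intro j hj
    have h1 : ((p : ℕ) : ℝ) + 1 - (b1 : ℝ) ≤ w (estar p) * Sp := by
      rw [← hSp] at hpZ
      exact (div_le_iff₀ hSppos).mp hpZ
    have h2 : w (estar p) ≤ w (estar j) := horder j p hj
    nlinarith
  constructor
  · intro j
    rw [hρ j]
    by_cases hj : j ≤ p
    · simp only [hj, if_true]
      have hd : 0 < w (estar j) * Sp := mul_pos (hwpos j) hSppos
      constructor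
      · have : (((p : ℕ) : ℝ) + 1 - b1) / (w (estar j) * Sp) ≤ 1 :=
          (div_le_one hd).mpr (key j hj)
        linarith
      · have : 0 ≤ (((p : ℕ) : ℝ) + 1 - b1) / (w (estar j) * Sp) :=
          div_nonneg hcnn hd.le
        linarith
    · simp [hj]
  · have hfil : Finset.filter (fun j => j ≤ p) Finset.univ = Finset.Iic p := by
      ext j; simp
    have hcard : (Finset.Iic p).card = (p : ℕ) + 1 := by
      exact Fin.card_Iic p
    calc ∑ j : Fin n, ρ j
        = ∑ j ∈ Finset.Iic p,
            (1 - (((p : ℕ) : ℝ) + 1 - b1) / (w (estar j) * Sp)) := by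
          simp_rw [hρ]
          rw [← hfil, Finset.sum_filter]
      _ = ∑ j ∈ Finset.Iic p,
            (1 - ((((p : ℕ) : ℝ) + 1 - b1) / Sp) * (1 / w (estar j))) := by
          apply Finset.sum_congr rfl
          intro j _
          have hwj := (hwpos j).ne'
          have hS := hSppos.ne'
          field_simp
      _ = ((Finset.Iic p).card : ℝ)
            - ((((p : ℕ) : ℝ) + 1 - b1) / Sp) * ∑ j ∈ Finset.Iic p, 1 / w (estar j) := by
          rw [Finset.sum_sub_distrib, Finset.sum_const, ← Finset.mul_sum]
          simp
      _ = (b1 : ℝ) := by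
          rw [← hSp, hcard]
          field_simp
          push_cast
          ring
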